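/- Let L be a finite modular lattice, let C ⊆ L_l be a constant height code with minimum distance D(C) > 2, let w ∈ L with h(w) = h(1) − 1, let L' := [0,w], and let C' be a code punctured from C by w. Then C' is a constant height code with C' ⊆ L'_{l−1}, |C'| = |C|, and D(C') ≥ D(C) − 2. -/

import Mathlib

/-- The height of an element: the greatest length of chains from `⊥` to `u`. -/
noncomputable def ht {L : Type*} [Preorder L] (u : L) : ℕ := (Order.height u).toNat

/-- An element `z` is a cycle if the interval `[⊥, z]` is a chain. -/
def IsCycle {L : Type*} [Lattice L] [BoundedOrder L] (z : L) : Prop :=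
  IsChain (· ≤ ·) (Set.Icc (⊥ : L) z)

/-- An element `z` is a dual cycle if the interval `[z, ⊤]` is a chain. -/
def IsDualCycle {L : Type*} [Lattice L] [BoundedOrder L] (z : L) : Prop :=
  IsChain (· ≤ ·) (Set.Icc z (⊤ : L))

/-- A lattice is semi-primary if every element is a join of cycles and a meet of
dual cycles. -/
def IsSemiPrimary (L : Type*) [Lattice L] [BoundedOrder L] : Prop :=
  ∀ u : L, (∃ s : Finset L, (∀ z ∈ s, IsCycle z) ∧ u = s.sup id) ∧
           (∃ s : Finset L, (∀ z ∈ s, IsDualCycle z) ∧ u = s.inf id)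

/-- A finite family of lattice elements is independent. -/
def IndepFun {L : Type*} [Lattice L] [BoundedOrder L] {n : ℕ} (z : Fin n → L) : Prop :=
  ∀ i, ((Finset.univ.erase i).sup z) ⊓ z i = ⊥

/-- A partition is (represented by) a multiset of positive natural numbers. -/
def IsPartition (μ : Multiset ℕ) : Prop := ∀ p ∈ μ, 0 < p

/-- The `i`-th largest part of a partition (0-indexed, 0 if out of range). -/
def partGet (μ : Multiset ℕ) (i : ℕ) : ℕ := ((μ.sort (· ≤ ·)).reverse).getD i 0

/-- Componentwise order on partitions: `μ ≤ λ` iff `μᵢ ≤ λᵢ` for all `i`. -/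
def PartLE (μ lam : Multiset ℕ) : Prop := ∀ i, partGet μ i ≤ partGet lam i

/-- For `λ = (sⁿ)` and `μ ≤ λ`, the partition `λ − μ = (s − μₙ, …, s − μ₁)`. -/
def partSub (s n : ℕ) (μ : Multiset ℕ) : Multiset ℕ :=
  Multiset.filter (fun x => 0 < x)
    (↑((List.range n).map (fun i => s - partGet μ i)) : Multiset ℕ)

/-- `u` has type `μ`: `u` is a join of independent nonzero cycles whose multiset of
heights equals `μ`. -/
def IsTypeOf {L : Type*} [Lattice L] [BoundedOrder L] (u : L) (μ : Multiset ℕ) : Prop :=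
  ∃ (n : ℕ) (z : Fin n → L), (∀ i, IsCycle (z i)) ∧ (∀ i, z i ≠ ⊥) ∧ IndepFun z ∧
    u = Finset.univ.sup z ∧ (↑(List.ofFn (fun i => ht (z i))) : Multiset ℕ) = μ

/-- The lattice metric `d(u,v) = h(u ∨ v) − h(u ∧ v)`. -/
noncomputable def dLat {L : Type*} [Lattice L] (u v : L) : ℕ := ht (u ⊔ v) - ht (u ⊓ v)

/-- The sphere of radius `r` centered at `u`. -/
def sph {L : Type*} [Lattice L] (u : L) (r : ℕ) : Set L := {v | dLat u v ≤ r}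

/-- The `t`-th layer of the sphere of radius `r` centered at `u`. -/
def sphH {L : Type*} [Lattice L] (u : L) (r t : ℕ) : Set L :=
  {v | dLat u v ≤ r ∧ ht v = t}

/-- The elements of type `μ` in the sphere of radius `r` centered at `u`. -/
def sphT {L : Type*} [Lattice L] [BoundedOrder L] (u : L) (r : ℕ) (μ : Multiset ℕ) :
    Set L := {v | dLat u v ≤ r ∧ IsTypeOf v μ}

/-- A finite semi-primary lattice is down-enumerable. -/
def DownEnum (L : Type*) [Lattice L] [BoundedOrder L] : Prop :=
  ∀ (u v : L) (φ μ : Multiset ℕ), IsTypeOf u φ → IsTypeOf v φ →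
    Nat.card {w : L // IsTypeOf w μ ∧ w ≤ u} = Nat.card {w : L // IsTypeOf w μ ∧ w ≤ v}

/-- A finite semi-primary lattice is up-enumerable. -/
def UpEnum (L : Type*) [Lattice L] [BoundedOrder L] : Prop :=
  ∀ (u v : L) (φ μ : Multiset ℕ), IsTypeOf u φ → IsTypeOf v φ →
    Nat.card {w : L // IsTypeOf w μ ∧ u ≤ w} = Nat.card {w : L // IsTypeOf w μ ∧ v ≤ w}

/-- A lattice is enumerable if it is both down- and up-enumerable. -/
def Enumerable (L : Type*) [Lattice L] [BoundedOrder L] : Prop := DownEnum L ∧ UpEnum L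

/-- `α(φ,μ)`: the number of elements of type `μ` below a (any) element of type `φ`. -/
noncomputable def alphaP (L : Type*) [Lattice L] [BoundedOrder L] (φ μ : Multiset ℕ) : ℕ :=
  sSup {n | ∃ u : L, IsTypeOf u φ ∧ n = Nat.card {w : L // IsTypeOf w μ ∧ w ≤ u}}

/-- `β(φ,μ)`: the number of elements of type `μ` above a (any) element of type `φ`. -/
noncomputable def betaP (L : Type*) [Lattice L] [BoundedOrder L] (φ μ : Multiset ℕ) : ℕ :=
  sSup {n | ∃ u : L, IsTypeOf u φ ∧ n = Nat.card {w : L // IsTypeOf w μ ∧ u ≤ w}}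

/-- `α(μ, r₁, …, rₙ)`: the number of chains `x₁ ≤ ⋯ ≤ xₙ ≤ w` with `h(xᵢ) = rᵢ`,
below a (any) element `w` of type `μ`. -/
noncomputable def alphaChain (L : Type*) [Lattice L] [BoundedOrder L] (μ : Multiset ℕ)
    {n : ℕ} (r : Fin n → ℕ) : ℕ :=
  sSup {m | ∃ w : L, IsTypeOf w μ ∧
    m = Nat.card {x : Fin n → L // (∀ i, ht (x i) = r i) ∧ Monotone x ∧ ∀ i, x i ≤ w}}


section Aux
set_option linter.unusedSectionVars false

variable {L : Type*} [Lattice L] [IsModularLattice L] [Fintype L]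

lemma aux_height_ne_top (x : L) : Order.height x ≠ ⊤ := by
  have h : Order.height x ≤ (Fintype.card L : ℕ∞) :=
    Order.height_le fun p _ => by exact_mod_cast p.length_lt_card.le
  exact (h.trans_lt (ENat.coe_lt_top _)).ne

lemma aux_ht_coe (x : L) : (ht x : ℕ∞) = Order.height x := ENat.coe_toNat (aux_height_ne_top x)

lemma aux_ht_mono {x y : L} (h : x ≤ y) : ht x ≤ ht y := by
  have := Order.height_mono h
  rw [← aux_ht_coe x, ← aux_ht_coe y] at this
  exact_mod_cast this

lemma aux_ht_strict {x y : L} (h : x < y) : ht x < ht y := by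
  have := Order.height_strictMono h ((aux_height_ne_top x).lt_top)
  rw [← aux_ht_coe x, ← aux_ht_coe y] at this
  exact_mod_cast this

lemma aux_jump (a b : L) {x y : L} (hxy : x < y) (hy : y ≤ a ⊔ b) :
    ht (x ⊓ a) + ht ((x ⊔ a) ⊓ b) < ht (y ⊓ a) + ht ((y ⊔ a) ⊓ b) := by
  have h1 : x ⊓ a ≤ y ⊓ a := inf_le_inf_right a hxy.le
  have h2 : (x ⊔ a) ⊓ b ≤ (y ⊔ a) ⊓ b := inf_le_inf_right b (sup_le_sup_right hxy.le a)
  rcases h1.lt_or_eq with h1' | h1'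
  · exact Nat.add_lt_add_of_lt_of_le (aux_ht_strict h1') (aux_ht_mono h2)
  rcases h2.lt_or_eq with h2' | h2'
  · exact Nat.add_lt_add_of_le_of_lt (aux_ht_mono h1'.le) (aux_ht_strict h2')
  exfalso
  have hsup : x ⊔ a = y ⊔ a := by
    refine eq_of_le_of_inf_le_of_sup_le (sup_le_sup_right hxy.le a) h2'.ge ?_
    have hb : a ⊔ b ≤ (x ⊔ a) ⊔ b := sup_le (le_sup_right.trans le_sup_left) le_sup_right
    exact sup_le (sup_le (hy.trans hb) (le_sup_right.trans le_sup_left)) le_sup_right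
  exact hxy.ne (eq_of_le_of_inf_le_of_sup_le hxy.le h1'.ge hsup.ge)

lemma aux_chain (a b : L) (p : LTSeries L) (hlast : p.last ≤ a ⊔ b) :
    p.length + (ht (p.head ⊓ a) + ht ((p.head ⊔ a) ⊓ b))
      ≤ ht (p.last ⊓ a) + ht ((p.last ⊔ a) ⊓ b) := by
  suffices H : ∀ i : Fin (p.length + 1),
      (i : ℕ) + (ht (p.head ⊓ a) + ht ((p.head ⊔ a) ⊓ b)) ≤ ht (p i ⊓ a) + ht ((p i ⊔ a) ⊓ b) by
    simpa [RelSeries.last, Fin.last] using H (Fin.last _)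
  intro i
  induction i using Fin.induction with
  | zero => simp [RelSeries.head]
  | succ i ih =>
      have hlt : p i.castSucc < p i.succ := p.strictMono Fin.castSucc_lt_succ
      have hle : p i.succ ≤ a ⊔ b := le_trans (p.monotone (Fin.le_last _)) hlast
      have := aux_jump a b hlt hle
      simp only [Fin.val_succ] at *
      simp only [Fin.coe_castSucc] at *
      omega

lemma aux_ht_submod (a b : L) : ht (a ⊔ b) + ht (a ⊓ b) ≤ ht a + ht b := by
  obtain ⟨p, hl, hlen⟩ := Order.exists_series_of_height_eq_coe (a ⊔ b) (aux_ht_coe (a ⊔ b)).symm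
  have hch := aux_chain a b p (hl ▸ le_rfl)
  rw [hl, hlen] at hch
  have e1 : (a ⊔ b) ⊓ a = a := inf_eq_right.2 le_sup_left
  have e2 : ((a ⊔ b) ⊔ a) ⊓ b = b := by
    rw [sup_eq_left.2 le_sup_left]; exact inf_eq_right.2 le_sup_right
  rw [e1, e2] at hch
  have hm : ht (a ⊓ b) ≤ ht ((p.head ⊔ a) ⊓ b) :=
    aux_ht_mono (inf_le_inf_right b le_sup_right)
  omega

end Aux

/-- Puncturing in a finite modular lattice: let `C ⊆ L_l` be a
constant height code with minimum distance `D(C) > 2`, let `w` have height `h(1) − 1`,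
and let `C'` be obtained from `C` by replacing each `v ∈ C` by some `f v ≤ v ∧ w` of
height `l − 1`. Then `C' ⊆ L'_{l−1}` (where `L' = [0,w]`), `|C'| = |C|`, and
`D(C') ≥ D(C) − 2` (for every lower bound `D` on the minimum distance of `C`,
`D − 2` is a lower bound on the minimum distance of `C'`). -/
theorem stmt18 {L : Type*} [Lattice L] [IsModularLattice L] [BoundedOrder L] [Fintype L]
    (l : ℕ) (C : Set L) (hC : C ⊆ {v : L | ht v = l})
    (hD2 : ∀ u ∈ C, ∀ v ∈ C, u ≠ v → 2 < dLat u v)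
    (w : L) (hw : ht w = ht (⊤ : L) - 1)
    (f : L → L) (hf : ∀ v ∈ C, f v ≤ v ⊓ w ∧ ht (f v) = l - 1)
    (C' : Set L) (hC' : C' = f '' C) :
    C' ⊆ {x : L | x ≤ w ∧ ht x = l - 1} ∧
    C'.ncard = C.ncard ∧
    (∀ D : ℕ, (∀ u ∈ C, ∀ v ∈ C, u ≠ v → D ≤ dLat u v) →
      ∀ u' ∈ C', ∀ v' ∈ C', u' ≠ v' → D - 2 ≤ dLat u' v') := by
  subst hC'
  refine ⟨?_, ?_, ?_⟩
  · rintro x ⟨v, hvC, rfl⟩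
    exact ⟨(hf v hvC).1.trans inf_le_right, (hf v hvC).2⟩
  · refine Set.ncard_image_of_injOn ?_
    intro u hu v hv hfe
    by_contra hne
    have h2 := hD2 u hu v hv hne
    have hfu := hf u hu
    have hfv := hf v hv
    have huv : f u ≤ u ⊓ v :=
      le_inf ((hfu.1).trans inf_le_left) (hfe ▸ (hfv.1).trans inf_le_left)
    have hB : l - 1 ≤ ht (u ⊓ v) := hfu.2 ▸ aux_ht_mono huv
    have hsub := aux_ht_submod u v
    have hu' : ht u = l := hC hu
    have hv' : ht v = l := hC hv
    have hBA : ht (u ⊓ v) ≤ ht u := aux_ht_mono inf_le_left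
    have hd : dLat u v = ht (u ⊔ v) - ht (u ⊓ v) := rfl
    omega
  · intro D hD u' hu' v' hv' hne
    obtain ⟨u, hu, rfl⟩ := hu'
    obtain ⟨v, hv, rfl⟩ := hv'
    have huv : u ≠ v := fun h => hne (by rw [h])
    have hDuv := hD u hu v hv huv
    have hfu := hf u hu
    have hfv := hf v hv
    have hu' : ht u = l := hC hu
    have hv' : ht v = l := hC hv
    have hfuu : f u ≤ u := (hfu.1).trans inf_le_left
    have hfvv : f v ≤ v := (hfv.1).trans inf_le_left
    -- (i) ht (f u ⊓ f v) ≤ ht (u ⊓ v)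
    have hi : ht (f u ⊓ f v) ≤ ht (u ⊓ v) := aux_ht_mono (inf_le_inf hfuu hfvv)
    -- (ii) ht (u ⊔ v) + (l-1) ≤ ht (u ⊔ f v) + l
    have hii : ht (u ⊔ v) + (l - 1) ≤ ht (u ⊔ f v) + l := by
      have hsub := aux_ht_submod (u ⊔ f v) v
      have he : (u ⊔ f v) ⊔ v = u ⊔ v := by
        rw [sup_assoc, sup_eq_right.2 hfvv]
      have hge : l - 1 ≤ ht ((u ⊔ f v) ⊓ v) :=
        hfv.2 ▸ aux_ht_mono (le_inf le_sup_right hfvv)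
      rw [he, hv'] at hsub
      omega
    -- (iii) ht (u ⊔ f v) + (l-1) ≤ ht (f u ⊔ f v) + l
    have hiii : ht (u ⊔ f v) + (l - 1) ≤ ht (f u ⊔ f v) + l := by
      have hsub := aux_ht_submod (f u ⊔ f v) u
      have he : (f u ⊔ f v) ⊔ u = u ⊔ f v := by
        rw [sup_comm (f u) (f v), sup_assoc, sup_eq_right.2 hfuu, sup_comm]
      have hge : l - 1 ≤ ht ((f u ⊔ f v) ⊓ u) :=
        hfu.2 ▸ aux_ht_mono (le_inf le_sup_left hfuu)
      rw [he, hu'] at hsub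
      omega
    have hBA : ht (u ⊓ v) ≤ ht (u ⊔ v) := aux_ht_mono (inf_le_left.trans le_sup_left)
    have hBA' : ht (f u ⊓ f v) ≤ ht (f u ⊔ f v) := aux_ht_mono (inf_le_left.trans le_sup_left)
    have hd1 : dLat u v = ht (u ⊔ v) - ht (u ⊓ v) := rfl
    have hd2 : dLat (f u) (f v) = ht (f u ⊔ f v) - ht (f u ⊓ f v) := rfl
    omega
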